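/- Let A be a maximal monotone operator on a real Hilbert space H. Suppose β_n → ∞, (u_n) is bounded, |α_n| ≤ c < 1, (α_n e_n) is bounded, and for some x₀ ∈ H the sequence x_{n+1} = (I + β_n A)⁻¹(u_n + α_n(x_n + e_n)) is bounded. Then A⁻¹(0) is nonempty; indeed every weak cluster point p of (x_n) satisfies 0 ∈ A(p). -/

import Mathlib

open scoped RealInnerProductSpace
open Filter

variable {H : Type*} [NormedAddCommGroup H] [InnerProductSpace ℝ H] [CompleteSpace H]

/-- A (possibly set-valued) operator `A : H → Set H` is monotone. -/
def IsMonotoneOp (A : H → Set H) : Prop :=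
  ∀ x₁ y₁ x₂ y₂, y₁ ∈ A x₁ → y₂ ∈ A x₂ → 0 ≤ ⟪x₁ - x₂, y₁ - y₂⟫

/-- `A` is maximal monotone: it is monotone and any pair `[x, y]` monotonically
related to the whole graph of `A` already belongs to the graph of `A`. -/
def IsMaximalMonotone (A : H → Set H) : Prop :=
  IsMonotoneOp A ∧ ∀ x y, (∀ v w, w ∈ A v → 0 ≤ ⟪v - x, w - y⟫) → y ∈ A x

/-- `J` is the resolvent `(I + βA)⁻¹` of `A`: for every `y`, `J y` satisfies
`(y - J y)/β ∈ A (J y)`, i.e. `y ∈ (I + βA)(J y)`. -/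
def IsResolvent (A : H → Set H) (β : ℝ) (J : H → H) : Prop :=
  ∀ y, β⁻¹ • (y - J y) ∈ A (J y)

/-- `p` is the metric projection of `u` onto the set `F`. -/
def IsProjection (F : Set H) (u p : H) : Prop :=
  p ∈ F ∧ ∀ q ∈ F, ‖u - p‖ ≤ ‖u - q‖

lemma exists_weak_subseq (x : ℕ → H) (M : ℝ) (hM : ∀ n, ‖x n‖ ≤ M) :
    ∃ (p : H) (φ : ℕ → ℕ), StrictMono φ ∧
      ∀ v : H, Tendsto (fun k => ⟪v, x (φ k)⟫) atTop (nhds ⟪v, p⟫) := by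
  have hM0 : 0 ≤ M := le_trans (norm_nonneg _) (hM 0)
  -- diagonal extraction
  obtain ⟨g, φ, hφ, hconv⟩ :
      ∃ (g : ℕ → ℝ) (φ : ℕ → ℕ), StrictMono φ ∧
        ∀ m, Tendsto (fun k => ⟪x m, x (φ k)⟫) atTop (nhds (g m)) := by
    set S : Set (ℕ → ℝ) := Set.univ.pi (fun _ => Set.Icc (-(M*M)) (M*M)) with hS
    have hcpt : IsCompact S := isCompact_univ_pi (fun _ => isCompact_Icc)
    have hseq : IsSeqCompact S := hcpt.isSeqCompact
    have hmem : ∀ k, (fun m => ⟪x m, x k⟫) ∈ S := by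
      intro k m _
      have := abs_real_inner_le_norm (x m) (x k)
      have h2 : ‖x m‖ * ‖x k‖ ≤ M * M := mul_le_mul (hM m) (hM k) (norm_nonneg _) hM0
      constructor <;> nlinarith [abs_nonneg ⟪x m, x k⟫, le_abs_self ⟪x m, x k⟫,
        neg_abs_le ⟪x m, x k⟫]
    obtain ⟨g, -, φ, hφ, hconv⟩ := hseq hmem
    exact ⟨g, φ, hφ, fun m => (tendsto_pi_nhds.1 hconv) m⟩
  -- convergence on the span
  have hspan : ∀ v ∈ Submodule.span ℝ (Set.range x),
      ∃ r, Tendsto (fun k => ⟪v, x (φ k)⟫) atTop (nhds r) := by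
    intro v hv
    induction hv using Submodule.span_induction with
    | mem v hv => obtain ⟨m, rfl⟩ := hv; exact ⟨g m, hconv m⟩
    | zero => exact ⟨0, by simpa using (tendsto_const_nhds : Tendsto (fun _ : ℕ => (0:ℝ)) atTop (nhds 0))⟩
    | add a b _ _ ha hb =>
        obtain ⟨r, hr⟩ := ha; obtain ⟨s, hs⟩ := hb
        exact ⟨r + s, by simpa [inner_add_left] using hr.add hs⟩
    | smul c a _ ha =>
        obtain ⟨r, hr⟩ := ha
        exact ⟨c * r, by simpa [real_inner_smul_left] using hr.const_mul c⟩
  -- Cauchy for every v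
  have hC : ∀ v : H, CauchySeq (fun k => ⟪v, x (φ k)⟫) := by
    intro v
    set K := (Submodule.span ℝ (Set.range x)).topologicalClosure with hK
    haveI : Submodule.HasOrthogonalProjection K := by
      have : IsClosed (K : Set H) := Submodule.isClosed_topologicalClosure _
      haveI : CompleteSpace K := this.completeSpace_coe
      infer_instance
    have hxK : ∀ n, x n ∈ K :=
      fun n => (Submodule.le_topologicalClosure _) (Submodule.subset_span ⟨n, rfl⟩)
    set u : H := (Submodule.orthogonalProjectionOnto K v : H) with hu
    have hvu : ∀ n, ⟪v, x n⟫ = ⟪u, x n⟫ := by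
      intro n
      have horth : v - u ∈ Kᗮ := Submodule.sub_starProjection_mem_orthogonal v
      have := horth (x n) (hxK n)
      have h2 : ⟪v - u, x n⟫ = 0 := by
        rw [real_inner_comm]; exact this
      rw [inner_sub_left] at h2; linarith
    have huK : u ∈ closure ((Submodule.span ℝ (Set.range x) : Set H)) := by
      have := (Submodule.orthogonalProjectionOnto K v).2
      rw [← Submodule.topologicalClosure_coe]
      exact this
    rw [Metric.cauchySeq_iff]
    intro ε hε
    obtain ⟨w, hwmem, hwd⟩ := Metric.mem_closure_iff.1 huK (ε / (3 * (M + 1)))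
      (by positivity)
    obtain ⟨r, hr⟩ := hspan w hwmem
    have hwc : CauchySeq (fun k => ⟪w, x (φ k)⟫) := hr.cauchySeq
    obtain ⟨N, hN⟩ := Metric.cauchySeq_iff.1 hwc (ε / 3) (by positivity)
    refine ⟨N, fun m hm n hn => ?_⟩
    have key : ∀ k, |⟪v, x (φ k)⟫ - ⟪w, x (φ k)⟫| ≤ ε / (3 * (M + 1)) * M := by
      intro k
      rw [hvu, ← inner_sub_left]
      calc |⟪u - w, x (φ k)⟫| ≤ ‖u - w‖ * ‖x (φ k)‖ := abs_real_inner_le_norm _ _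
        _ ≤ ε / (3 * (M + 1)) * M := by
            apply mul_le_mul _ (hM _) (norm_nonneg _) (by positivity)
            exact le_of_lt (by rwa [← dist_eq_norm])
    have h1 := key m
    have h2 := key n
    have h3 := hN m hm n hn
    have hMle : ε / (3 * (M + 1)) * M < ε / 3 := by
      rw [div_mul_eq_mul_div, div_lt_div_iff₀ (by positivity) (by norm_num)]
      nlinarith
    rw [Real.dist_eq] at h3 ⊢
    have := abs_sub_abs_le_abs_sub (⟪v, x (φ m)⟫ - ⟪v, x (φ n)⟫) 0
    calc |⟪v, x (φ m)⟫ - ⟪v, x (φ n)⟫|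
        ≤ |⟪v, x (φ m)⟫ - ⟪w, x (φ m)⟫| + |⟪w, x (φ m)⟫ - ⟪w, x (φ n)⟫|
          + |⟪w, x (φ n)⟫ - ⟪v, x (φ n)⟫| := by
          have := abs_sub_le (⟪v, x (φ m)⟫) (⟪w, x (φ m)⟫) (⟪v, x (φ n)⟫)
          have h4 := abs_sub_le (⟪w, x (φ m)⟫) (⟪w, x (φ n)⟫) (⟪v, x (φ n)⟫)
          linarith
      _ < ε := by rw [abs_sub_comm (⟪w, x (φ n)⟫)] at *; linarith
  -- limits exist; build the functional
  have hlim : ∀ v : H, ∃ r, Tendsto (fun k => ⟪v, x (φ k)⟫) atTop (nhds r) :=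
    fun v => cauchySeq_tendsto_of_complete (hC v)
  choose L hL using hlim
  have hadd : ∀ a b, L (a + b) = L a + L b := fun a b =>
    tendsto_nhds_unique (by simpa [inner_add_left] using hL (a + b)) ((hL a).add (hL b))
  have hsmul : ∀ (c : ℝ) a, L (c • a) = c * L a := fun c a =>
    tendsto_nhds_unique (by simpa [real_inner_smul_left] using hL (c • a))
      ((hL a).const_mul c)
  have hbdd : ∀ v, ‖L v‖ ≤ M * ‖v‖ := by
    intro v
    have : Tendsto (fun k => |⟪v, x (φ k)⟫|) atTop (nhds |L v|) := (hL v).abs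
    refine le_of_tendsto this (Filter.Eventually.of_forall fun k => ?_)
    calc |⟪v, x (φ k)⟫| ≤ ‖v‖ * ‖x (φ k)‖ := abs_real_inner_le_norm _ _
      _ ≤ M * ‖v‖ := by
          rw [mul_comm]; exact mul_le_mul_of_nonneg_right (hM _) (norm_nonneg _)
  let Lmap : H →ₗ[ℝ] ℝ :=
    { toFun := L, map_add' := hadd, map_smul' := hsmul }
  let Lclm : H →L[ℝ] ℝ := LinearMap.mkContinuous Lmap M hbdd
  refine ⟨(InnerProductSpace.toDual ℝ H).symm Lclm, φ, hφ, fun v => ?_⟩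
  have : ⟪(InnerProductSpace.toDual ℝ H).symm Lclm, v⟫ = Lclm v :=
    InnerProductSpace.toDual_symm_apply
  rw [real_inner_comm, this]
  exact hL v


/-- If the sequence generated by the algorithm is bounded (with `β_n → ∞`, `(u_n)` bounded,
`|α_n| ≤ c < 1`, `(α_n e_n)` bounded), then `A⁻¹(0)` is nonempty; indeed every weak
cluster point `p` of `(x_n)` satisfies `0 ∈ A p`. -/
theorem stmt_3 (A : H → Set H) (hA : IsMaximalMonotone A)
    (β : ℕ → ℝ) (hβpos : ∀ n, 0 < β n) (hβ : Tendsto β atTop atTop)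
    (useq : ℕ → H) (hub : ∃ M, ∀ n, ‖useq n‖ ≤ M)
    (α : ℕ → ℝ) (c : ℝ) (hc : c < 1) (hαc : ∀ n, |α n| ≤ c)
    (e : ℕ → H) (hαe : ∃ M, ∀ n, ‖α n • e n‖ ≤ M)
    (J : ℕ → H → H) (hJ : ∀ n, IsResolvent A (β n) (J n))
    (x : ℕ → H) (hx : ∀ n, x (n + 1) = J n (useq n + α n • (x n + e n)))
    (hxb : ∃ M, ∀ n, ‖x n‖ ≤ M) :
    (∃ p, (0 : H) ∈ A p) ∧
      ∀ (p : H) (φ : ℕ → ℕ), StrictMono φ →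
        (∀ v : H, Tendsto (fun k => ⟪v, x (φ k)⟫) atTop (nhds ⟪v, p⟫)) →
        (0 : H) ∈ A p := by
  obtain ⟨Mu, hMu⟩ := hub
  obtain ⟨Me, hMe⟩ := hαe
  obtain ⟨Mx, hMx⟩ := hxb
  have hMx0 : 0 ≤ Mx := le_trans (norm_nonneg _) (hMx 0)
  have hc0 : 0 ≤ c := le_trans (abs_nonneg _) (hαc 0)
  set w : ℕ → H := fun n => (β n)⁻¹ • (useq n + α n • (x n + e n) - x (n + 1)) with hw
  have hwA : ∀ n, w n ∈ A (x (n + 1)) := by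
    intro n
    have := hJ n (useq n + α n • (x n + e n))
    rwa [← hx n] at this
  have hwb : ∀ n, ‖w n‖ ≤ (β n)⁻¹ * (Mu + (c * Mx + Me) + Mx) := by
    intro n
    rw [hw]
    simp only [norm_smul, Real.norm_eq_abs, abs_inv, abs_of_pos (hβpos n)]
    apply mul_le_mul_of_nonneg_left _ (inv_nonneg.2 (hβpos n).le)
    calc ‖useq n + α n • (x n + e n) - x (n + 1)‖
        ≤ ‖useq n + α n • (x n + e n)‖ + ‖x (n + 1)‖ := norm_sub_le _ _
      _ ≤ (‖useq n‖ + ‖α n • (x n + e n)‖) + ‖x (n + 1)‖ := by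
          gcongr; exact norm_add_le _ _
      _ ≤ Mu + (c * Mx + Me) + Mx := by
          have h1 : ‖α n • (x n + e n)‖ ≤ c * Mx + Me := by
            rw [smul_add]
            refine le_trans (norm_add_le _ _) ?_
            gcongr
            · rw [norm_smul, Real.norm_eq_abs]
              exact mul_le_mul (hαc n) (hMx n) (norm_nonneg _) hc0
            · exact hMe n
          have := hMu n; have := hMx (n + 1); linarith
  have hw0 : Tendsto (fun n => ‖w n‖) atTop (nhds 0) := by
    have hβinv : Tendsto (fun n => (β n)⁻¹) atTop (nhds 0) := hβ.inv_tendsto_atTop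
    have h2 : Tendsto (fun n => (β n)⁻¹ * (Mu + (c * Mx + Me) + Mx)) atTop (nhds 0) := by
      simpa using hβinv.mul_const (Mu + (c * Mx + Me) + Mx)
    exact squeeze_zero (fun n => norm_nonneg _) hwb h2
  have key : ∀ (p : H) (φ : ℕ → ℕ), StrictMono φ →
      (∀ v : H, Tendsto (fun k => ⟪v, x (φ k)⟫) atTop (nhds ⟪v, p⟫)) →
      (0 : H) ∈ A p := by
    intro p φ hφ hwc
    refine hA.2 p 0 (fun v z hz => ?_)
    rw [sub_zero]
    have hφge : ∀ k, k + 1 ≤ φ (k + 1) := fun k => hφ.le_apply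
    have hsucc : ∀ k, φ (k + 1) - 1 + 1 = φ (k + 1) :=
      fun k => Nat.succ_pred_eq_of_pos (lt_of_lt_of_le (Nat.succ_pos k) (hφge k))
    have hk : ∀ k, (0:ℝ) ≤ ⟪v - x (φ (k + 1)), z - w (φ (k + 1) - 1)⟫ := by
      intro k
      have := hA.1 v z (x (φ (k + 1) - 1 + 1)) (w (φ (k + 1) - 1)) hz (hwA (φ (k + 1) - 1))
      rwa [hsucc k] at this
    -- limit of the inner products
    have hx1 : Tendsto (fun k => ⟪z, x (φ (k + 1))⟫) atTop (nhds ⟪z, p⟫) :=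
      (hwc z).comp (tendsto_add_atTop_nat 1)
    have hterm1 : Tendsto (fun k => ⟪v - x (φ (k + 1)), z⟫) atTop (nhds ⟪v - p, z⟫) := by
      have : Tendsto (fun k => ⟪v, z⟫ - ⟪z, x (φ (k + 1))⟫) atTop (nhds (⟪v, z⟫ - ⟪z, p⟫)) :=
        tendsto_const_nhds.sub hx1
      convert this using 2 with k
      · rw [inner_sub_left, real_inner_comm (x (φ (k+1))) z]
      · rw [inner_sub_left, real_inner_comm p z]
    have hwm : Tendsto (fun k => ‖w (φ (k + 1) - 1)‖) atTop (nhds 0) := by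
      refine hw0.comp (tendsto_atTop_mono (fun k => ?_) tendsto_id)
      have := hφge k; simp only [id_eq]; omega
    have hterm2 : Tendsto (fun k => ⟪v - x (φ (k + 1)), w (φ (k + 1) - 1)⟫) atTop (nhds 0) := by
      apply squeeze_zero_norm (fun k => ?_) (by simpa using hwm.const_mul (‖v‖ + Mx))
      calc ‖⟪v - x (φ (k + 1)), w (φ (k + 1) - 1)⟫‖
          ≤ ‖v - x (φ (k + 1))‖ * ‖w (φ (k + 1) - 1)‖ := norm_inner_le_norm _ _
        _ ≤ (‖v‖ + Mx) * ‖w (φ (k + 1) - 1)‖ := by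
            apply mul_le_mul_of_nonneg_right _ (norm_nonneg _)
            exact le_trans (norm_sub_le _ _) (by have := hMx (φ (k+1)); linarith)
    have hlim : Tendsto (fun k => ⟪v - x (φ (k + 1)), z - w (φ (k + 1) - 1)⟫) atTop
        (nhds ⟪v - p, z⟫) := by
      have := hterm1.sub hterm2
      rw [sub_zero] at this
      convert this using 2 with k
      rw [inner_sub_right]
    exact ge_of_tendsto' hlim hk
  constructor
  · obtain ⟨p, φ, hφ, hwc⟩ := exists_weak_subseq x Mx hMx
    exact ⟨p, key p φ hφ hwc⟩
  · exact key
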